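/- Let g = 2r + 1 with r ≥ 2, and let G_1 = π_g / N(ℬ^g_1). Then the images of a_{r+1} and c_r in G_1 are trivial, and for every 1 ≤ k ≤ r the images of the words a_k a_{g+1−k} and b_k a_{g+1−k} b_{g+1−k} a_{g+1−k}^{-1} in G_1 are trivial. -/
import Mathlib


namespace Paper

/-- The free group `F_g` on the `2g` generators `a_1, b_1, …, a_g, b_g`
(the pair `(i, false)` is `a_{i+1}`, the pair `(i, true)` is `b_{i+1}`). -/
abbrev F (g : ℕ) := FreeGroup (Fin g × Bool)

/-- The generator `a_i` of `F_g`, for `1 ≤ i ≤ g`; by convention `a_i = 1` for out-of-range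
indices (in particular `a_{g+1} = 1`). -/
def a (g i : ℕ) : F g :=
  if h : 1 ≤ i ∧ i ≤ g then FreeGroup.of (⟨i - 1, by omega⟩, false) else 1

/-- The generator `b_i` of `F_g`, for `1 ≤ i ≤ g`. -/
def b (g i : ℕ) : F g :=
  if h : 1 ≤ i ∧ i ≤ g then FreeGroup.of (⟨i - 1, by omega⟩, true) else 1

/-- The word `c_i = b_i⁻¹ ⋯ b_2⁻¹ b_1⁻¹ (a_1 b_1 a_1⁻¹)(a_2 b_2 a_2⁻¹) ⋯ (a_i b_i a_i⁻¹)`,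
with `c_0 = 1`. -/
def c (g i : ℕ) : F g :=
  (((List.range i).reverse.map fun j => (b g (j + 1))⁻¹).prod) *
    (((List.range i).map fun j => a g (j + 1) * b g (j + 1) * (a g (j + 1))⁻¹).prod)

/-- The product `b_i b_{i+1} ⋯ b_j`. -/
def prodb (g i j : ℕ) : F g := ((List.range (j + 1 - i)).map fun l => b g (i + l)).prod

/-- `B^h_{0,1} = b_1 b_2 ⋯ b_h`. -/
def B01 (g h : ℕ) : F g := prodb g 1 h

/-- `B^h_{0,2} = b_1 b_2 ⋯ b_h · c_h a_{h+1}`. -/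
def B02 (g h : ℕ) : F g := prodb g 1 h * c g h * a g (h + 1)

/-- `B^h_{0,s}` for `s = 1, 2`. -/
def B0 (g s h : ℕ) : F g := if s = 1 then B01 g h else B02 g h

/-- `B^h_{2k-1} = a_k · b_k b_{k+1} ⋯ b_{h+1-k} · c_{h+1-k} a_{h+1-k}`. -/
def Bodd (g h k : ℕ) : F g :=
  a g k * prodb g k (h + 1 - k) * c g (h + 1 - k) * a g (h + 1 - k)

/-- `B^h_{2k} = a_k · b_{k+1} b_{k+2} ⋯ b_{h-k} · c_{h-k} a_{h+1-k}`. -/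
def Beven (g h k : ℕ) : F g :=
  a g k * prodb g (k + 1) (h - k) * c g (h - k) * a g (h + 1 - k)

/-- The set of words `ℬ^h_s`: it consists of `B^h_{0,s}, B^h_1, …, B^h_h` (the odd-indexed
`B^h_{2k-1}` for `2k - 1 ≤ h` and the even-indexed `B^h_{2k}` for `2k ≤ h`), together with
`a_{r+1}` and `c_r a_{r+1}` when `h = 2r + 1` is odd. -/
def Bset (g s h : ℕ) : Set (F g) :=
  {B0 g s h}
    ∪ {w | ∃ k, 1 ≤ k ∧ 2 * k - 1 ≤ h ∧ w = Bodd g h k}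
    ∪ {w | ∃ k, 1 ≤ k ∧ 2 * k ≤ h ∧ w = Beven g h k}
    ∪ (if h % 2 = 1 then {a g (h / 2 + 1), c g (h / 2) * a g (h / 2 + 1)} else (∅ : Set (F g)))

/-- The genus-`g` surface group `π_g`, presented with generators `a_1, b_1, …, a_g, b_g`
and the single relator `c_g`. -/
abbrev pi (g : ℕ) := PresentedGroup ({c g g} : Set (F g))

/-- The natural projection `F_g → π_g`. -/
abbrev toPi (g : ℕ) : F g →* pi g := PresentedGroup.mk _

/-- The quotient of `π_g` by the normal closure of the images of a set `S` of words. -/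
abbrev quotBy (g : ℕ) (S : Set (F g)) :=
  pi g ⧸ Subgroup.normalClosure (toPi g '' S)

/-- The projection `π_g → π_g / N(S)`. -/
abbrev projBy (g : ℕ) (S : Set (F g)) : pi g →* quotBy g S :=
  QuotientGroup.mk' _

/-- Splitting off the first factor of `b_i ⋯ b_j`. -/
private lemma prodb_left (g i j : ℕ) (h : i ≤ j) :
    prodb g i j = b g i * prodb g (i + 1) j := by
  unfold prodb
  rw [show j + 1 - i = (j - i) + 1 by omega, List.range_succ_eq_map,
    show j + 1 - (i + 1) = j - i by omega, List.map_cons, List.prod_cons, List.map_map]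
  have h1 : i + 0 = i := by omega
  rw [h1]
  congr 1
  apply congrArg List.prod
  apply List.map_congr_left
  intro l _
  simp only [Function.comp_apply]
  congr 1
  omega

/-- Splitting off the last factor of `b_i ⋯ b_j`. -/
private lemma prodb_right (g i j : ℕ) (h1 : i ≤ j) (h2 : 1 ≤ j) :
    prodb g i j = prodb g i (j - 1) * b g j := by
  unfold prodb
  rw [show j + 1 - i = (j - i) + 1 by omega, List.range_succ,
    show (j - 1) + 1 - i = j - i by omega, List.map_append, List.prod_append]
  simp only [List.map_cons, List.prod_cons, List.map_nil, List.prod_nil, mul_one]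
  congr 2
  omega

/-- The recursion `c_{m+1} = b_{m+1}⁻¹ c_m (a_{m+1} b_{m+1} a_{m+1}⁻¹)`. -/
private lemma c_succ (g m : ℕ) :
    c g (m + 1) = (b g (m + 1))⁻¹ * c g m *
      (a g (m + 1) * b g (m + 1) * (a g (m + 1))⁻¹) := by
  unfold c
  rw [List.range_succ]
  simp only [List.reverse_append, List.reverse_cons, List.reverse_nil, List.nil_append,
    List.cons_append, List.map_cons, List.map_append, List.prod_cons, List.prod_append,
    List.map_nil, List.prod_nil, mul_one]
  group

/-- The composite map `F_g → π_g → π_g / N(ℬ^g_1)`. -/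
def fmap (g : ℕ) : F g →* quotBy g (Bset g 1 g) :=
  (projBy g (Bset g 1 g)).comp (toPi g)

private lemma fmap_eq_one (g : ℕ) (w : F g) (hw : w ∈ Bset g 1 g) : fmap g w = 1 := by
  have h : toPi g w ∈ Subgroup.normalClosure (toPi g '' Bset g 1 g) :=
    Subgroup.subset_normalClosure ⟨w, hw, rfl⟩
  exact (QuotientGroup.eq_one_iff _).mpr h

/-- For `g = 2r + 1` with `r ≥ 2`, in `G_1 = π_g / N(ℬ^g_1)` the images of
`a_{r+1}` and `c_r` are trivial, and the images of the words `a_k a_{g+1-k}` and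
`b_k a_{g+1-k} b_{g+1-k} a_{g+1-k}⁻¹` are trivial for every `1 ≤ k ≤ r`. -/
theorem G1_relations_odd (r g : ℕ) (hr : 2 ≤ r) (hg : g = 2 * r + 1) :
    projBy g (Bset g 1 g) (toPi g (a g (r + 1))) = 1 ∧
      projBy g (Bset g 1 g) (toPi g (c g r)) = 1 ∧
      ∀ k, 1 ≤ k → k ≤ r →
        projBy g (Bset g 1 g) (toPi g (a g k * a g (g + 1 - k))) = 1 ∧
        projBy g (Bset g 1 g)
          (toPi g (b g k * a g (g + 1 - k) * b g (g + 1 - k) * (a g (g + 1 - k))⁻¹)) = 1 := by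
  -- memberships in ℬ^g_1
  have hmemOdd : ∀ k, 1 ≤ k → 2 * k - 1 ≤ g → Bodd g g k ∈ Bset g 1 g := by
    intro k h1 h2
    apply Set.mem_union_left
    apply Set.mem_union_left
    apply Set.mem_union_right
    exact ⟨k, h1, h2, rfl⟩
  have hmemEven : ∀ k, 1 ≤ k → 2 * k ≤ g → Beven g g k ∈ Bset g 1 g := by
    intro k h1 h2
    apply Set.mem_union_left
    apply Set.mem_union_right
    exact ⟨k, h1, h2, rfl⟩
  have hmem_a : a g (r + 1) ∈ Bset g 1 g := by
    apply Set.mem_union_right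
    rw [if_pos (show g % 2 = 1 by omega), show g / 2 = r by omega]
    exact Set.mem_insert _ _
  have hmem_ca : c g r * a g (r + 1) ∈ Bset g 1 g := by
    apply Set.mem_union_right
    rw [if_pos (show g % 2 = 1 by omega), show g / 2 = r by omega]
    exact Set.mem_insert_of_mem _ rfl
  -- basic relations in the quotient
  have hA : fmap g (a g (r + 1)) = 1 := fmap_eq_one g _ hmem_a
  have hC : fmap g (c g r) = 1 := by
    have h := fmap_eq_one g _ hmem_ca
    rw [map_mul, hA, mul_one] at h
    exact h
  have hOdd : ∀ k, 1 ≤ k → 2 * k - 1 ≤ g → fmap g (Bodd g g k) = 1 :=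
    fun k h1 h2 => fmap_eq_one g _ (hmemOdd k h1 h2)
  have hEven : ∀ k, 1 ≤ k → 2 * k ≤ g → fmap g (Beven g g k) = 1 :=
    fun k h1 h2 => fmap_eq_one g _ (hmemEven k h1 h2)
  -- the combination Q_k c_{g-k} in the quotient
  have hQC : ∀ k, 1 ≤ k → k ≤ r →
      fmap g (prodb g (k + 1) (g - k)) * fmap g (c g (g - k)) =
        (fmap g (a g k))⁻¹ * (fmap g (a g (g + 1 - k)))⁻¹ := by
    intro k h1 h2
    have hB : Beven g g k =
        a g k * (prodb g (k + 1) (g - k) * c g (g - k)) * a g (g + 1 - k) := by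
      show a g k * prodb g (k + 1) (g - k) * c g (g - k) * a g (g + 1 - k) = _
      group
    have he := hEven k h1 (by omega)
    rw [hB] at he
    simp only [map_mul] at he
    calc fmap g (prodb g (k + 1) (g - k)) * fmap g (c g (g - k))
        = (fmap g (a g k))⁻¹ *
            (fmap g (a g k) * (fmap g (prodb g (k + 1) (g - k)) * fmap g (c g (g - k))) *
              fmap g (a g (g + 1 - k))) * (fmap g (a g (g + 1 - k)))⁻¹ := by group
      _ = (fmap g (a g k))⁻¹ * 1 * (fmap g (a g (g + 1 - k)))⁻¹ := by rw [he]
      _ = (fmap g (a g k))⁻¹ * (fmap g (a g (g + 1 - k)))⁻¹ := by group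
  -- downward induction: a_k a_{g+1-k} = 1
  have key : ∀ d k, 1 ≤ k → k + d = r + 1 →
      fmap g (a g k) * fmap g (a g (g + 1 - k)) = 1 := by
    intro d
    induction d with
    | zero =>
      intro k h1 h2
      have hk : k = r + 1 := by omega
      subst hk
      rw [show g + 1 - (r + 1) = r + 1 by omega, hA, one_mul]
    | succ d ih =>
      intro k h1 h2
      have hk : k ≤ r := by omega
      have IH := ih (k + 1) (by omega) (by omega)
      rw [show g + 1 - (k + 1) = g - k by omega] at IH
      have e : fmap g (a g (g - k)) = (fmap g (a g (k + 1)))⁻¹ := by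
        rw [mul_eq_one_iff_inv_eq] at IH
        exact IH.symm
      have hBo : Bodd g g (k + 1) =
          a g (k + 1) * (prodb g (k + 1) (g - k) * c g (g - k)) * a g (g - k) := by
        show a g (k + 1) * prodb g (k + 1) (g + 1 - (k + 1)) * c g (g + 1 - (k + 1)) *
            a g (g + 1 - (k + 1)) = _
        rw [show g + 1 - (k + 1) = g - k by omega]
        group
      have ho := hOdd (k + 1) (by omega) (by omega)
      rw [hBo] at ho
      simp only [map_mul] at ho
      rw [hQC k h1 hk, e] at ho
      -- ho : u * (v⁻¹ * w⁻¹) * u⁻¹ = 1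
      have h1' : (fmap g (a g k))⁻¹ * (fmap g (a g (g + 1 - k)))⁻¹ = 1 := by
        calc (fmap g (a g k))⁻¹ * (fmap g (a g (g + 1 - k)))⁻¹
            = (fmap g (a g (k + 1)))⁻¹ *
              (fmap g (a g (k + 1)) *
                ((fmap g (a g k))⁻¹ * (fmap g (a g (g + 1 - k)))⁻¹) *
                (fmap g (a g (k + 1)))⁻¹) * fmap g (a g (k + 1)) := by group
          _ = (fmap g (a g (k + 1)))⁻¹ * 1 * fmap g (a g (k + 1)) := by rw [ho]
          _ = 1 := by group
      rw [mul_eq_one_iff_eq_inv, inv_inv] at h1'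
      rw [← h1']
      group
  have hx : ∀ k, 1 ≤ k → k ≤ r → fmap g (a g k) * fmap g (a g (g + 1 - k)) = 1 :=
    fun k h1 h2 => key (r + 1 - k) k h1 (by omega)
  refine ⟨hA, hC, ?_⟩
  intro k h1 h2
  constructor
  · show fmap g (a g k * a g (g + 1 - k)) = 1
    rw [map_mul]
    exact hx k h1 h2
  · show fmap g (b g k * a g (g + 1 - k) * b g (g + 1 - k) * (a g (g + 1 - k))⁻¹) = 1
    -- first derive b_{g+1-k} = a_k b_k⁻¹ a_k⁻¹ in the quotient
    have hw : Bodd g g k =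
        a g k * b g k * (prodb g (k + 1) (g - k) * c g (g - k)) *
          (a g (g + 1 - k) * b g (g + 1 - k)) := by
      show a g k * prodb g k (g + 1 - k) * c g (g + 1 - k) * a g (g + 1 - k) = _
      rw [prodb_left g k (g + 1 - k) (by omega),
        prodb_right g (k + 1) (g + 1 - k) (by omega) (by omega),
        show g + 1 - k - 1 = g - k by omega,
        show g + 1 - k = (g - k) + 1 by omega,
        c_succ g (g - k)]
      group
    have ho := hOdd k h1 (by omega)
    rw [hw] at ho
    simp only [map_mul] at ho
    rw [hQC k h1 h2] at ho
    have RR : fmap g (a g k) * fmap g (b g k) * (fmap g (a g k))⁻¹ *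
        fmap g (b g (g + 1 - k)) = 1 := by
      calc fmap g (a g k) * fmap g (b g k) * (fmap g (a g k))⁻¹ *
            fmap g (b g (g + 1 - k))
          = fmap g (a g k) * fmap g (b g k) *
              ((fmap g (a g k))⁻¹ * (fmap g (a g (g + 1 - k)))⁻¹) *
              (fmap g (a g (g + 1 - k)) * fmap g (b g (g + 1 - k))) := by group
        _ = 1 := ho
    have e1 : fmap g (a g (g + 1 - k)) = (fmap g (a g k))⁻¹ := by
      have := hx k h1 h2
      rw [mul_eq_one_iff_inv_eq] at this
      exact this.symm
    simp only [map_mul, map_inv]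
    rw [e1]
    calc fmap g (b g k) * (fmap g (a g k))⁻¹ * fmap g (b g (g + 1 - k)) *
          ((fmap g (a g k))⁻¹)⁻¹
        = (fmap g (a g k))⁻¹ *
            (fmap g (a g k) * fmap g (b g k) * (fmap g (a g k))⁻¹ *
              fmap g (b g (g + 1 - k))) * fmap g (a g k) := by group
      _ = (fmap g (a g k))⁻¹ * 1 * fmap g (a g k) := by rw [RR]
      _ = 1 := by group
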